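/- arXiv:1308.6339 — 3 statements merged into one kernel-verified Lean document; each statement's English description precedes it below -/
import Mathlib

section
/- Let W be a real random variable such that E[exp(λW²)] ≤ (1 − 4ηλ)^{−1/2} for all 0 < λ < 1/(4η), where 0 < η ≤ 1/2. Define φ(λ) = log E[exp(λ(W² − 1))]. Then for all 0 < λ < 1/(4η), φ(λ) ≤ 8η²λ²/(1 − 4ηλ). -/
open MeasureTheory

/-- If `E[exp (λ W²)] ≤ (1 − 4ηλ)^{−1/2}` for all `0 < λ < 1/(4η)` with `0 < η ≤ 1/2`,
then `φ(λ) = log E[exp (λ(W² − 1))]` satisfies `φ(λ) ≤ 8η²λ²/(1 − 4ηλ)` on this range. -/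
theorem log_mgf_shifted_bound {Ω : Type*} [MeasurableSpace Ω]
    (μ : Measure Ω) [IsProbabilityMeasure μ] (W : Ω → ℝ)
    (η : ℝ) (hη0 : 0 < η) (hη : η ≤ 1/2)
    (hW : ∀ l : ℝ, 0 < l → l < 1/(4*η) →
      ∫ ω, Real.exp (l * W ω ^ 2) ∂μ ≤ (1 - 4*η*l) ^ (-(1/2) : ℝ)) :
    ∀ l : ℝ, 0 < l → l < 1/(4*η) →
      Real.log (∫ ω, Real.exp (l * (W ω ^ 2 - 1)) ∂μ) ≤ 8*η^2*l^2 / (1 - 4*η*l) := by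
  intro l hl hl'
  have hu : 4*η*l < 1 := by
    have := (lt_div_iff₀ (by positivity : (0:ℝ) < 4*η)).mp hl'
    linarith
  have h1 : 0 < 1 - 4*η*l := by linarith
  have key := hW l hl hl'
  have hInt : ∫ ω, Real.exp (l * (W ω ^ 2 - 1)) ∂μ
      = Real.exp (-l) * ∫ ω, Real.exp (l * W ω ^ 2) ∂μ := by
    rw [← integral_const_mul]
    congr 1
    funext ω
    rw [← Real.exp_add]
    ring_nf
  set I := ∫ ω, Real.exp (l * W ω ^ 2) ∂μ with hIdef
  have hInonneg : 0 ≤ I := integral_nonneg fun ω => (Real.exp_pos _).le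
  have hRHSpos : 0 < 8*η^2*l^2 / (1 - 4*η*l) := by positivity
  rcases eq_or_lt_of_le hInonneg with h0 | hpos
  · rw [hInt, ← h0, mul_zero, Real.log_zero]
    linarith
  · rw [hInt, Real.log_mul (by positivity) (ne_of_gt hpos), Real.log_exp]
    have hlogI : Real.log I ≤ -(1/2) * Real.log (1 - 4*η*l) := by
      calc Real.log I ≤ Real.log ((1 - 4*η*l) ^ (-(1/2):ℝ)) :=
            Real.log_le_log hpos key
        _ = -(1/2) * Real.log (1 - 4*η*l) := Real.log_rpow h1 _
    have hloglb : -Real.log (1 - 4*η*l) ≤ (4*η*l) / (1 - 4*η*l) := by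
      have h := Real.log_le_sub_one_of_pos (x := (1 - 4*η*l)⁻¹) (by positivity)
      rw [Real.log_inv] at h
      have heq : (1 - 4*η*l)⁻¹ - 1 = (4*η*l) / (1 - 4*η*l) := by
        field_simp
        ring
      linarith [heq ▸ h]
    have halg : -l + (1/2) * ((4*η*l) / (1 - 4*η*l)) ≤ 8*η^2*l^2 / (1 - 4*η*l) := by
      have e : -l + (1/2) * ((4*η*l) / (1 - 4*η*l))
          = (-l*(1 - 4*η*l) + 2*η*l) / (1 - 4*η*l) := by
        have hc : (4*η*l) / (1 - 4*η*l) * (1 - 4*η*l) = 4*η*l := div_mul_cancel₀ _ h1.ne'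
        rw [eq_div_iff h1.ne']
        linear_combination (1/2 : ℝ) * hc
      rw [e, div_le_div_iff₀ h1 h1]
      nlinarith [mul_pos hl h1, mul_nonneg (by linarith : (0:ℝ) ≤ 1 - 2*η) (mul_pos hl h1).le]
    linarith
end

section
/- Let W satisfy E[exp(λW²)] ≤ (1 − 4ηλ)^{−1/2} for 0 < λ < 1/(4η) with (1/2)(1−β²)/(1+β²) ≤ η ≤ 1/2 and β = 2ηλ < 1/2. Define ψ(λ) = log E[exp(λ(1 − W²))]. Then ψ(λ) ≤ 8η²λ²/(1 − 4ηλ) at λ = β/(2η). -/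
open MeasureTheory

lemma key_ineq (β η : ℝ) (hβ0 : 0 < β) (hβ : β < 1/2)
    (hη1 : (1/2) * ((1 - β^2) / (1 + β^2)) ≤ η) (hη0 : 0 < η) :
    β/(2*η) - (1/2) * Real.log (1 + 2*β) ≤ 2*β^2/(1 - 2*β) := by
  have h1 : 0 < 1 - β^2 := by nlinarith
  have h2 : (0:ℝ) < 1 + 2*β := by linarith
  have h3 : 0 < 1 - 2*β := by linarith
  have h4 : 0 < 1 + β^2 := by positivity
  -- log lower bound : log(1+2β) ≥ 2β/(1+2β)
  have hlog : 2*β/(1+2*β) ≤ Real.log (1 + 2*β) := by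
    have h := Real.log_le_sub_one_of_pos (x := (1+2*β)⁻¹) (by positivity)
    rw [Real.log_inv] at h
    have : 1 - (1+2*β)⁻¹ = 2*β/(1+2*β) := by field_simp; ring
    linarith [h, this]
  -- β/(2η) ≤ β(1+β²)/(1−β²)
  have hd : (1 - β^2)/(1 + β^2) ≤ 2*η := by
    have : (1/2) * ((1 - β^2) / (1 + β^2)) ≤ η := hη1
    linarith
  have hd0 : 0 < (1 - β^2)/(1 + β^2) := div_pos h1 h4
  have hstep : β/(2*η) ≤ β*(1+β^2)/(1-β^2) := by
    have := div_le_div_of_nonneg_left (le_of_lt hβ0) hd0 hd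
    calc β/(2*η) ≤ β/((1 - β^2)/(1 + β^2)) := this
      _ = β*(1+β^2)/(1-β^2) := by rw [div_div_eq_mul_div]
  -- polynomial inequality
  have hpoly : β*(1+β^2)/(1-β^2) ≤ β/(1+2*β) + 2*β^2/(1-2*β) := by
    rw [div_add_div _ _ (ne_of_gt h2) (ne_of_gt h3), div_le_div_iff₀ h1 (by nlinarith)]
    nlinarith [sq_nonneg β, pow_pos hβ0 3]
  have e : 2*β/(1+2*β) = 2*(β/(1+2*β)) := by ring
  linarith [hlog, hstep, hpoly, e]

/-- Lower-tail log-MGF bound: if `E[exp (λ W²)] ≤ (1 − 4ηλ)^{−1/2}` for `λ < 1/(4η)`,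
with `(1/2)(1−β²)/(1+β²) ≤ η ≤ 1/2` and `β = 2ηλ < 1/2`, then
`ψ(λ) = log E[exp (λ(1 − W²))] ≤ 8η²λ²/(1 − 4ηλ)` at `λ = β/(2η)`. -/
theorem log_mgf_lower_tail_bound {Ω : Type*} [MeasurableSpace Ω]
    (μ : Measure Ω) [IsProbabilityMeasure μ] (W : Ω → ℝ)
    (η β : ℝ) (hβ0 : 0 < β) (hβ : β < 1/2)
    (hη1 : (1/2) * ((1 - β^2) / (1 + β^2)) ≤ η) (hη2 : η ≤ 1/2)
    (hW : ∀ l : ℝ, l < 1/(4*η) →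
      ∫ ω, Real.exp (l * W ω ^ 2) ∂μ ≤ (1 - 4*η*l) ^ (-(1/2) : ℝ)) :
    Real.log (∫ ω, Real.exp ((β/(2*η)) * (1 - W ω ^ 2)) ∂μ)
      ≤ 8*η^2*(β/(2*η))^2 / (1 - 4*η*(β/(2*η))) := by
  have hb2 : 0 < 1 - β^2 := by nlinarith
  have hη0 : 0 < η := by
    calc (0:ℝ) < (1/2) * ((1 - β^2) / (1 + β^2)) := by positivity
      _ ≤ η := hη1
  set l := β/(2*η) with hl
  have hl0 : 0 < l := by positivity
  have h4ηl : 4*η*l = 2*β := by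
    field_simp [hl]
    rw [hl]; field_simp; norm_num
  have hRHS : 8*η^2*l^2 / (1 - 4*η*l) = 2*β^2/(1 - 2*β) := by
    rw [h4ηl]
    congr 1
    field_simp [hl]
    rw [hl]; field_simp; norm_num
  have hb2' : (0:ℝ) < 1 + 2*β := by linarith
  have hWneg := hW (-l) (by
    have : (0:ℝ) < 1/(4*η) := by positivity
    linarith)
  have harg : 1 - 4*η*(-l) = 1 + 2*β := by
    have : 4*η*(-l) = -(4*η*l) := by ring
    rw [this, h4ηl]; ring
  rw [harg] at hWneg
  -- integral factorization
  have hfac : ∫ ω, Real.exp (l * (1 - W ω ^ 2)) ∂μ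
      = Real.exp l * ∫ ω, Real.exp ((-l) * W ω ^ 2) ∂μ := by
    rw [← integral_const_mul]
    refine integral_congr_ae (Filter.Eventually.of_forall fun ω => ?_)
    show Real.exp (l * (1 - W ω ^ 2)) = Real.exp l * Real.exp ((-l) * W ω ^ 2)
    rw [← Real.exp_add]
    congr 1
    ring
  have hbound : ∫ ω, Real.exp (l * (1 - W ω ^ 2)) ∂μ
      ≤ Real.exp l * (1 + 2*β) ^ (-(1/2) : ℝ) := by
    rw [hfac]
    exact mul_le_mul_of_nonneg_left hWneg (le_of_lt (Real.exp_pos l))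
  have hlogB : Real.log (Real.exp l * (1 + 2*β) ^ (-(1/2) : ℝ))
      = l - (1/2) * Real.log (1 + 2*β) := by
    rw [Real.log_mul (ne_of_gt (Real.exp_pos l)) (by positivity),
      Real.log_exp, Real.log_rpow hb2']
    ring
  have hkey := key_ineq β η hβ0 hβ hη1 hη0
  rw [hRHS]
  have hInn : 0 ≤ ∫ ω, Real.exp (l * (1 - W ω ^ 2)) ∂μ :=
    integral_nonneg fun ω => le_of_lt (Real.exp_pos _)
  rcases eq_or_lt_of_le hInn with h0 | h0
  · rw [← h0, Real.log_zero]
    have : 0 < 1 - 2*β := by linarith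
    positivity
  · calc Real.log (∫ ω, Real.exp (l * (1 - W ω ^ 2)) ∂μ)
        ≤ Real.log (Real.exp l * (1 + 2*β) ^ (-(1/2) : ℝ)) :=
          Real.log_le_log h0 hbound
      _ = l - (1/2) * Real.log (1 + 2*β) := hlogB
      _ ≤ 2*β^2/(1 - 2*β) := hkey
end

section
/- For the matrices B_i = x_i·S P^i C (x a unit vector in ℝ^d), the quantity σ² := max{‖Σ_i B_i B_iᵀ‖, ‖Σ_i B_iᵀ B_i‖} equals 1, where ‖·‖ denotes the operator (spectral) norm. -/
open Matrix Finset

private lemma permMatrix_mul_transpose {d : ℕ} (e : Equiv.Perm (Fin d)) :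
    (e.toPEquiv.toMatrix : Matrix (Fin d) (Fin d) ℝ) * (e.toPEquiv.toMatrix)ᵀ = 1 := by
  rw [← PEquiv.toMatrix_symm, ← PEquiv.toMatrix_trans, ← Equiv.toPEquiv_symm,
    ← Equiv.toPEquiv_trans]
  simp

private lemma cancel_of_mul_transpose {d : ℕ} {M : Matrix (Fin d) (Fin d) ℝ}
    (h : M * Mᵀ = 1) {m : Type*} (X : Matrix (Fin d) m ℝ) : M * (Mᵀ * X) = X := by
  rw [← Matrix.mul_assoc, h, Matrix.one_mul]

private lemma norm_le_one_of_idem {n : Type*} [Fintype n] [DecidableEq n]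
    (p : Matrix n n ℝ) (hstar : star p = p) (hidem : p * p = p) :
    ‖Matrix.toEuclideanCLM (𝕜 := ℝ) p‖ ≤ 1 := by
  set a := Matrix.toEuclideanCLM (𝕜 := ℝ) p with hadef
  have hsa : star a = a := by rw [hadef, ← map_star, hstar]
  have hcs : ‖ContinuousLinearMap.adjoint a ∘L a‖ = ‖a‖ * ‖a‖ :=
    ContinuousLinearMap.norm_adjoint_comp_self a
  rw [← ContinuousLinearMap.star_eq_adjoint, hsa] at hcs
  have hmul : a ∘L a = a := by
    show a * a = a
    rw [hadef, ← _root_.map_mul, hidem]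
  rw [hmul] at hcs
  nlinarith [norm_nonneg a]

set_option maxHeartbeats 1000000 in
set_option synthInstance.maxHeartbeats 400000 in
/-- For `B i = x i • S P^i C` with `x` a unit vector, the variance parameter
`σ² = max{‖Σ B_i B_iᵀ‖, ‖Σ B_iᵀ B_i‖}` (operator norms) equals `1`. -/
theorem sigma_sq_eq_one (d k : ℕ) (hk : 0 < k) (hkd : k ≤ d)
    (x : Fin d → ℝ) (hx : ∑ i, x i ^ 2 = 1)
    (S : Matrix (Fin k) (Fin d) ℝ)
    (hS : ∀ r j, S r j = if (r : ℕ) = (j : ℕ) then 1 else 0)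
    (P C : Matrix (Fin d) (Fin d) ℝ)
    (hP : ∀ i j, P i j = if (i : ℕ) = ((j : ℕ) + 1) % d then 1 else 0)
    (hC : ∀ i j, C i j = if (j : ℕ) = (d - (i : ℕ)) % d then 1 else 0)
    (B : Fin d → Matrix (Fin k) (Fin d) ℝ)
    (hB : ∀ i : Fin d, B i = x i • (S * P ^ (i : ℕ) * C)) :
    max ‖Matrix.toEuclideanCLM (𝕜 := ℝ) (∑ i, B i * (B i)ᵀ)‖
        ‖Matrix.toEuclideanCLM (𝕜 := ℝ) (∑ i, (B i)ᵀ * B i)‖ = 1 := by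
  have hd : 0 < d := lt_of_lt_of_le hk hkd
  haveI : NeZero d := ⟨hd.ne'⟩
  have hPmat : P = ((Equiv.addRight (1 : Fin d)).symm.toPEquiv.toMatrix :
      Matrix (Fin d) (Fin d) ℝ) := by
    ext i j
    rw [hP, PEquiv.toMatrix_apply, Equiv.toPEquiv_apply]
    have h1 : ((i : ℕ) = ((j : ℕ) + 1) % d) ↔ i = j + 1 := by
      simp [Fin.ext_iff, Fin.add_def, Fin.val_one', Nat.add_mod_mod]
    have h2 : i = j + 1 ↔ j = i - 1 := by
      constructor <;> intro h <;> simp [h]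
    simp [h1, h2, sub_eq_add_neg, eq_comm]
  have hCmat : C = ((Equiv.neg (Fin d)).toPEquiv.toMatrix : Matrix (Fin d) (Fin d) ℝ) := by
    ext i j
    rw [hC, PEquiv.toMatrix_apply, Equiv.toPEquiv_apply]
    have : ((j : ℕ) = (d - (i : ℕ)) % d) ↔ (j = -i) := by
      rw [Fin.ext_iff, Fin.neg_def]
    simp [this, eq_comm]
  have hPP : P * Pᵀ = 1 := by rw [hPmat]; exact permMatrix_mul_transpose _
  have hCC : C * Cᵀ = 1 := by rw [hCmat]; exact permMatrix_mul_transpose _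
  have hPn : ∀ n : ℕ, P ^ n * (P ^ n)ᵀ = 1 := by
    intro n
    induction n with
    | zero => simp
    | succ n ih =>
      rw [pow_succ, transpose_mul, Matrix.mul_assoc, cancel_of_mul_transpose hPP, ih]
  set Q : Fin d → Matrix (Fin d) (Fin d) ℝ := fun i => P ^ (i : ℕ) * C with hQdef
  have hQQ : ∀ i, Q i * (Q i)ᵀ = 1 := by
    intro i
    show P ^ (i : ℕ) * C * (P ^ (i : ℕ) * C)ᵀ = 1
    rw [transpose_mul, Matrix.mul_assoc, cancel_of_mul_transpose hCC, hPn]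
  have hSS : S * Sᵀ = 1 := by
    ext r s
    have key : ∀ (r : Fin k) (j : Fin d), S r j = if j = Fin.castLE hkd r then 1 else 0 := by
      intro r j; rw [hS]; congr 1
      simp [Fin.ext_iff, eq_comm]
    simp only [Matrix.mul_apply, transpose_apply, key, ite_mul, one_mul, zero_mul,
      Finset.sum_ite_eq', Finset.mem_univ, if_true]
    simp [one_apply, Fin.ext_iff]
  have hQcan : ∀ (i : Fin d) {m : Type} (X : Matrix (Fin d) m ℝ),
      Q i * ((Q i)ᵀ * X) = X := by
    intro i m X; exact cancel_of_mul_transpose (hQQ i) X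
  have hScan : ∀ {m : Type} (X : Matrix (Fin k) m ℝ), S * (Sᵀ * X) = X := by
    intro m X; rw [← Matrix.mul_assoc, hSS, Matrix.one_mul]
  -- first sum equals the identity
  have hB1 : ∀ i, B i * (B i)ᵀ = x i ^ 2 • (1 : Matrix (Fin k) (Fin k) ℝ) := by
    intro i
    rw [hB, Matrix.mul_assoc S]
    show (x i • (S * Q i)) * (x i • (S * Q i))ᵀ = _
    rw [transpose_smul, Matrix.smul_mul, Matrix.mul_smul, smul_smul, ← sq]
    congr 1
    rw [transpose_mul, Matrix.mul_assoc, hQcan, hSS]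
  have hsum1 : (∑ i, B i * (B i)ᵀ) = (1 : Matrix (Fin k) (Fin k) ℝ) := by
    simp_rw [hB1, ← Finset.sum_smul, hx, one_smul]
  haveI : Nonempty (Fin k) := ⟨⟨0, hk⟩⟩
  haveI : Nontrivial (EuclideanSpace ℝ (Fin k)) :=
    (WithLp.equiv 2 (Fin k → ℝ)).nontrivial
  have hnorm1 : ‖Matrix.toEuclideanCLM (𝕜 := ℝ) (∑ i, B i * (B i)ᵀ)‖ = 1 := by
    rw [hsum1, _root_.map_one, norm_one]
  -- second sum has norm at most 1
  have hp : ∀ i : Fin d, (B i)ᵀ * B i = x i ^ 2 • ((Q i)ᵀ * (Sᵀ * S) * Q i) := by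
    intro i
    rw [hB, Matrix.mul_assoc S]
    show (x i • (S * Q i))ᵀ * (x i • (S * Q i)) = _
    rw [transpose_smul, Matrix.smul_mul, Matrix.mul_smul, smul_smul, ← sq]
    congr 1
    simp only [transpose_mul, Matrix.mul_assoc]
  have hple : ∀ i : Fin d,
      ‖Matrix.toEuclideanCLM (𝕜 := ℝ) ((Q i)ᵀ * (Sᵀ * S) * Q i)‖ ≤ 1 := by
    intro i
    set p : Matrix (Fin d) (Fin d) ℝ := (Q i)ᵀ * (Sᵀ * S) * Q i with hpdef
    have hstar : star p = p := by
      rw [Matrix.star_eq_conjTranspose, conjTranspose_eq_transpose_of_trivial, hpdef]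
      simp [transpose_mul, Matrix.mul_assoc]
    have hidem : p * p = p := by
      rw [hpdef]
      simp only [Matrix.mul_assoc, hQcan, hScan]
    exact norm_le_one_of_idem p hstar hidem
  have hnorm2 : ‖Matrix.toEuclideanCLM (𝕜 := ℝ) (∑ i, (B i)ᵀ * B i)‖ ≤ 1 := by
    rw [map_sum]
    refine le_trans (norm_sum_le _ _) ?_
    calc ∑ i, ‖Matrix.toEuclideanCLM (𝕜 := ℝ) ((B i)ᵀ * B i)‖
        ≤ ∑ i, x i ^ 2 := by
          refine Finset.sum_le_sum fun i _ => ?_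
          rw [hp i, _root_.map_smul]
          refine le_trans (ContinuousLinearMap.opNorm_smul_le _ _) ?_
          rw [Real.norm_of_nonneg (sq_nonneg _)]
          calc x i ^ 2 * ‖Matrix.toEuclideanCLM (𝕜 := ℝ) ((Q i)ᵀ * (Sᵀ * S) * Q i)‖
              ≤ x i ^ 2 * 1 := mul_le_mul_of_nonneg_left (hple i) (sq_nonneg _)
            _ = x i ^ 2 := mul_one _
      _ = 1 := hx
  rw [hnorm1, max_eq_left (hnorm1 ▸ hnorm2 : _ ≤ _)]
end
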